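/- Fix q ≥ 2 and a finite set A with |A| = q. For every ε > 0 there exists N such that for every n ≥ N there exist m ≥ n and a complete n-universal transformation f : A^m → A^m whose maximal sequential time satisfies st^max_f ≤ (n + 1 + ε)·q^{n·q^n}. -/

import Mathlib

/-- The instruction of `A^m` induced by the `i`-th coordinate function of `f`. -/
def instr {A : Type*} {m : ℕ} (f : (Fin m → A) → Fin m → A) (i : Fin m) :
    (Fin m → A) → Fin m → A :=
  fun x => Function.update x i (f x i)

/-- Apply a list of induced instructions of `f`, first element of the list first. -/
def applyInstrs {A : Type*} {m : ℕ} (f : (Fin m → A) → Fin m → A) :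
    List (Fin m) → (Fin m → A) → Fin m → A
  | [], x => x
  | i :: l, x => applyInstrs f l (instr f i x)

/-- Projection of `A^m` onto the first `n` coordinates. -/
def pr {A : Type*} {m n : ℕ} (hmn : n ≤ m) (x : Fin m → A) : Fin n → A :=
  fun i => x (Fin.castLE hmn i)

/-- `hs` witnesses that `f` sequentially simulates the sequence `gs`: the `k`-th
element of `hs` is a nonempty list of instruction indices expressing `h^(k) ∈ S_f`,
and for each `i` the composition `h^(1) ∘ ⋯ ∘ h^(i)` simulates `g^(i)`. -/
def SeqWitness {A : Type*} {m n : ℕ} (hmn : n ≤ m)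
    (f : (Fin m → A) → Fin m → A)
    (gs : List ((Fin n → A) → Fin n → A))
    (hs : List (List (Fin m))) : Prop :=
  hs.length = gs.length ∧ (∀ l ∈ hs, l ≠ []) ∧
    ∀ (i : ℕ) (hi : i < gs.length) (x : Fin m → A),
      gs.get ⟨i, hi⟩ (pr hmn x) = pr hmn (applyInstrs f ((hs.take (i + 1)).flatten) x)

set_option linter.unusedSectionVars false

namespace CUaux

def instrB {A J : Type*} [DecidableEq J] (F : (J → A) → J → A) (i : J) (s : J → A) : J → A :=
  Function.update s i (F s i)

def applyB {A J : Type*} [DecidableEq J] (F : (J → A) → J → A) : List J → (J → A) → J → A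
  | [], s => s
  | i :: l, s => applyB F l (instrB F i s)

lemma applyB_append {A J : Type*} [DecidableEq J] (F : (J → A) → J → A)
    (l1 l2 : List J) (s : J → A) :
    applyB F (l1 ++ l2) s = applyB F l2 (applyB F l1 s) := by
  induction l1 generalizing s with
  | nil => rfl
  | cons a l ih => simp [applyB, ih]

lemma conj {A : Type*} {m : ℕ} {J : Type*} [DecidableEq J] (σ : Fin m ≃ J)
    (F : (J → A) → J → A) (l : List J) (x : Fin m → A) :
    applyInstrs (fun y i => F (y ∘ σ.symm) (σ i)) (l.map σ.symm) x
      = applyB F l (x ∘ σ.symm) ∘ σ := by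
  induction l generalizing x with
  | nil => funext k; simp [applyInstrs, applyB, Function.comp]
  | cons i l ih =>
    simp only [List.map_cons, applyInstrs, applyB, instr, instrB, Equiv.apply_symm_apply]
    rw [ih]
    have hst : (Function.update x (σ.symm i) (F (x ∘ ⇑σ.symm) i)) ∘ ⇑σ.symm
        = Function.update (x ∘ ⇑σ.symm) i (F (x ∘ ⇑σ.symm) i) := by
      funext j
      simp [Function.comp_apply, Function.update_apply, EmbeddingLike.apply_eq_iff_eq]
    rw [hst]

section Machine

variable {A : Type*} {R : Type*} [CommRing R] [Fintype R] [DecidableEq R] {n d : ℕ}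

abbrev Idx (n d : ℕ) (R : Type*) := Fin n ⊕ (Fin n ⊕ (Fin d ⊕ (Fin d → R)))

def xc (i : Fin n) : Idx n d R := Sum.inl i
def yc (i : Fin n) : Idx n d R := Sum.inr (Sum.inl i)
def zc (r : Fin d) : Idx n d R := Sum.inr (Sum.inr (Sum.inl r))
def cc (w : Fin d → R) : Idx n d R := Sum.inr (Sum.inr (Sum.inr w))

variable (e : A ≃ R)

def xval (s : Idx n d R → A) : Fin n → A := fun i => s (xc i)
def yval (s : Idx n d R → A) : Fin n → A := fun i => s (yc i)
def zval (s : Idx n d R → A) : Fin d → R := fun r => e (s (zc r))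
def cval (s : Idx n d R → A) : (Fin d → R) → R := fun w => e (s (cc w))
def csum (s : Idx n d R → A) : Fin d → R := ∑ w : Fin d → R, cval e s w • w
def vval (s : Idx n d R → A) : Fin d → R := zval e s + csum e s

variable (ι : ((Fin n → A) → Fin n → A) ≃ (Fin d → R))

def Fbig (s : Idx n d R → A) : Idx n d R → A
  | Sum.inl i => ι.symm (vval e s) (yval s) i
  | Sum.inr (Sum.inl i) => s (Sum.inl i)
  | Sum.inr (Sum.inr (Sum.inl r)) => e.symm (-(csum e s r))
  | Sum.inr (Sum.inr (Sum.inr w)) => e.symm (e (s (cc w)) + 1)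

variable {e ι}

/-! ### frame lemmas -/

lemma yval_update_xc (s : Idx n d R → A) (i : Fin n) (a : A) :
    yval (Function.update s (xc i) a) = yval s := by
  funext k; simp [yval, xc, yc, Function.update_apply]

lemma zval_update_xc (s : Idx n d R → A) (i : Fin n) (a : A) :
    zval e (Function.update s (xc i) a) = zval e s := by
  funext k; simp [zval, xc, zc, Function.update_apply]

lemma cval_update_xc (s : Idx n d R → A) (i : Fin n) (a : A) :
    cval e (Function.update s (xc i) a) = cval e s := by
  funext k; simp [cval, xc, cc, Function.update_apply]

lemma xval_update_yc (s : Idx n d R → A) (i : Fin n) (a : A) :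
    xval (Function.update s (yc i) a) = xval s := by
  funext k; simp [xval, xc, yc, Function.update_apply]

lemma zval_update_yc (s : Idx n d R → A) (i : Fin n) (a : A) :
    zval e (Function.update s (yc i) a) = zval e s := by
  funext k; simp [zval, yc, zc, Function.update_apply]

lemma cval_update_yc (s : Idx n d R → A) (i : Fin n) (a : A) :
    cval e (Function.update s (yc i) a) = cval e s := by
  funext k; simp [cval, yc, cc, Function.update_apply]

lemma xval_update_zc (s : Idx n d R → A) (r : Fin d) (a : A) :
    xval (Function.update s (zc r) a) = xval s := by
  funext k; simp [xval, xc, zc, Function.update_apply]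

lemma yval_update_zc (s : Idx n d R → A) (r : Fin d) (a : A) :
    yval (Function.update s (zc r) a) = yval s := by
  funext k; simp [yval, yc, zc, Function.update_apply]

lemma cval_update_zc (s : Idx n d R → A) (r : Fin d) (a : A) :
    cval e (Function.update s (zc r) a) = cval e s := by
  funext k; simp [cval, zc, cc, Function.update_apply]

lemma xval_update_cc (s : Idx n d R → A) (w : Fin d → R) (a : A) :
    xval (Function.update s (cc w) a) = xval s := by
  funext k; simp [xval, xc, cc, Function.update_apply]

lemma yval_update_cc (s : Idx n d R → A) (w : Fin d → R) (a : A) :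
    yval (Function.update s (cc w) a) = yval s := by
  funext k; simp [yval, yc, cc, Function.update_apply]

lemma zval_update_cc (s : Idx n d R → A) (w : Fin d → R) (a : A) :
    zval e (Function.update s (cc w) a) = zval e s := by
  funext k; simp [zval, zc, cc, Function.update_apply]

lemma csum_update_xc (s : Idx n d R → A) (i : Fin n) (a : A) :
    csum e (Function.update s (xc i) a) = csum e s := by
  unfold csum; rw [cval_update_xc]

lemma csum_update_yc (s : Idx n d R → A) (i : Fin n) (a : A) :
    csum e (Function.update s (yc i) a) = csum e s := by
  unfold csum; rw [cval_update_yc]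

lemma csum_update_zc (s : Idx n d R → A) (r : Fin d) (a : A) :
    csum e (Function.update s (zc r) a) = csum e s := by
  unfold csum; rw [cval_update_zc]

lemma vval_update_xc (s : Idx n d R → A) (i : Fin n) (a : A) :
    vval e (Function.update s (xc i) a) = vval e s := by
  unfold vval; rw [zval_update_xc, csum_update_xc]

lemma vval_update_yc (s : Idx n d R → A) (i : Fin n) (a : A) :
    vval e (Function.update s (yc i) a) = vval e s := by
  unfold vval; rw [zval_update_yc, csum_update_yc]

/-- the effect of a single counter increment on the checksum -/
lemma csum_update_cc (s : Idx n d R → A) (w : Fin d → R) :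
    csum e (Function.update s (cc w) (e.symm (e (s (cc w)) + 1))) = csum e s + w := by
  have hc : cval e (Function.update s (cc w) (e.symm (e (s (cc w)) + 1)))
      = Function.update (cval e s) w (cval e s w + 1) := by
    funext k
    simp only [cval, Function.update_apply]
    by_cases hk : k = w
    · subst hk
      simp [cc]
    · have : (cc k : Idx n d R) ≠ cc w := by simp [cc, hk]
      simp [this, Function.update_apply, hk]
  unfold csum
  have key : ∀ g : (Fin d → R) → R,
      ∑ x : Fin d → R, g x • x = (∑ x ∈ Finset.univ.erase w, g x • x) + g w • w :=
    fun g => (Finset.sum_erase_add _ _ (Finset.mem_univ w)).symm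
  rw [hc, key, key (cval e s)]
  have herase : ∑ x ∈ Finset.univ.erase w, Function.update (cval e s) w (cval e s w + 1) x • x
      = ∑ x ∈ Finset.univ.erase w, cval e s x • x := by
    refine Finset.sum_congr rfl fun x hx => ?_
    rw [Function.update_of_ne (Finset.ne_of_mem_erase hx)]
  rw [herase, Function.update_self, add_smul, one_smul]
  abel


/-! ### block lemmas -/

lemma applyB_xc (l : List (Fin n)) (s : Idx n d R → A) :
    applyB (Fbig e ι) (l.map xc) s
      = Sum.elim (fun i => if i ∈ l then ι.symm (vval e s) (yval s) i else s (xc i))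
          (fun k => s (Sum.inr k)) := by
  induction l generalizing s with
  | nil => funext j; cases j <;> simp [applyB, xc]
  | cons a l ih =>
    simp only [List.map_cons, applyB]
    rw [ih]
    have hv : vval e (instrB (Fbig e ι) (xc a) s) = vval e s := vval_update_xc _ _ _
    have hy : yval (instrB (Fbig e ι) (xc a) s) = yval s := yval_update_xc _ _ _
    funext j
    cases j with
    | inr k => simp [instrB, xc, Function.update_apply]
    | inl i =>
      rw [Sum.elim_inl, Sum.elim_inl, hv, hy]
      by_cases hi : i = a
      · subst hi
        simp [instrB, xc, Fbig]
      · have hne : (xc i : Idx n d R) ≠ xc a := by simp [xc, hi]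
        by_cases hl : i ∈ l <;>
          simp [instrB, Function.update_of_ne hne, hi, hl]

lemma applyB_yc (l : List (Fin n)) (s : Idx n d R → A) :
    applyB (Fbig e ι) (l.map yc) s
      = Sum.elim (fun i => s (Sum.inl i))
          (Sum.elim (fun i => if i ∈ l then s (Sum.inl i) else s (yc i))
            (fun k => s (Sum.inr (Sum.inr k)))) := by
  induction l generalizing s with
  | nil => funext j; rcases j with i | j; · simp [applyB]
           · rcases j with i | k <;> simp [applyB, yc]
  | cons a l ih =>
    simp only [List.map_cons, applyB]
    rw [ih]
    funext j
    rcases j with i | j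
    · simp [instrB, yc, Function.update_apply]
    · rcases j with i | k
      · rw [Sum.elim_inr, Sum.elim_inr, Sum.elim_inl, Sum.elim_inl]
        by_cases hi : i = a
        · subst hi
          simp [instrB, yc, Fbig, Function.update_apply]
        · have hne : (yc i : Idx n d R) ≠ yc a := by simp [yc, hi]
          by_cases hl : i ∈ l <;>
            simp [instrB, Function.update_of_ne hne, hi, hl, yc, Function.update_apply]
      · simp [instrB, yc, Function.update_apply]

lemma applyB_zc (l : List (Fin d)) (s : Idx n d R → A) :
    applyB (Fbig e ι) (l.map zc) s
      = Sum.elim (fun i => s (Sum.inl i))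
          (Sum.elim (fun i => s (yc i))
            (Sum.elim (fun r => if r ∈ l then e.symm (-(csum e s r)) else s (zc r))
              (fun w => s (cc w)))) := by
  induction l generalizing s with
  | nil =>
    funext j
    rcases j with i | (i | (r | w)) <;> simp [applyB, yc, zc, cc]
  | cons a l ih =>
    simp only [List.map_cons, applyB]
    rw [ih]
    have hcs : csum e (instrB (Fbig e ι) (zc a) s) = csum e s := csum_update_zc _ _ _
    funext j
    rcases j with i | (i | (r | w))
    · simp [instrB, zc, Function.update_apply]
    · simp [instrB, zc, yc, Function.update_apply]
    · rw [Sum.elim_inr, Sum.elim_inr, Sum.elim_inr, Sum.elim_inr, Sum.elim_inl, Sum.elim_inl,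
        hcs]
      by_cases hr : r = a
      · subst hr
        simp [instrB, zc, Fbig, Function.update_apply]
      · have hne : (zc r : Idx n d R) ≠ zc a := by simp [zc, hr]
        by_cases hl : r ∈ l <;>
          simp [instrB, Function.update_of_ne hne, hr, hl]
    · simp [instrB, zc, cc, Function.update_apply]


/-! ### programs -/

variable (ι) in
def stepL (v : Fin d → R) (g : (Fin n → A) → Fin n → A) : List (Idx n d R) :=
  cc (ι g - v) :: (List.finRange n).map xc

def initL : List (Idx n d R) :=
  (List.finRange d).map zc ++ (List.finRange n).map yc

lemma Fbig_cc (s : Idx n d R → A) (w : Fin d → R) :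
    Fbig e ι s (cc w) = e.symm (e (s (cc w)) + 1) := rfl

lemma step_spec (s : Idx n d R → A) (v : Fin d → R) (g : (Fin n → A) → Fin n → A)
    (hv : vval e s = v) :
    xval (applyB (Fbig e ι) (stepL ι v g) s) = g (yval s) ∧
    yval (applyB (Fbig e ι) (stepL ι v g) s) = yval s ∧
    vval e (applyB (Fbig e ι) (stepL ι v g) s) = ι g := by
  set w := ι g - v with hw
  have hstep : applyB (Fbig e ι) (stepL ι v g) s
      = applyB (Fbig e ι) ((List.finRange n).map xc) (instrB (Fbig e ι) (cc w) s) := rfl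
  set s₁ := instrB (Fbig e ι) (cc w) s with hs₁
  have h₁ : s₁ = Function.update s (cc w) (e.symm (e (s (cc w)) + 1)) := rfl
  have hy₁ : yval s₁ = yval s := by rw [h₁]; exact yval_update_cc _ _ _
  have hv₁ : vval e s₁ = ι g := by
    rw [vval, h₁, zval_update_cc, csum_update_cc]
    rw [vval] at hv
    rw [← add_assoc, hv, hw]
    abel
  have hinr : ∀ k, applyB (Fbig e ι) ((List.finRange n).map xc) s₁ (Sum.inr k)
      = s₁ (Sum.inr k) := by
    intro k
    rw [applyB_xc]
    simp
  refine ⟨?_, ?_, ?_⟩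
  · funext i
    rw [hstep, applyB_xc]
    simp [xval, xc, List.mem_finRange, hv₁, hy₁]
  · funext i
    rw [hstep]
    show applyB (Fbig e ι) ((List.finRange n).map xc) s₁ (Sum.inr (Sum.inl i)) = yval s i
    rw [hinr]
    exact congrFun hy₁ i
  · rw [hstep]
    have hzz : zval e (applyB (Fbig e ι) ((List.finRange n).map xc) s₁) = zval e s₁ := by
      funext r
      simp only [zval, zc]
      rw [hinr]
    have hcc2 : cval e (applyB (Fbig e ι) ((List.finRange n).map xc) s₁) = cval e s₁ := by
      funext w'
      simp only [cval, cc]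
      rw [hinr]
    rw [vval, hzz, csum, hcc2, ← csum, ← vval, hv₁]

lemma init_spec (s : Idx n d R → A) :
    yval (applyB (Fbig e ι) (initL (R := R)) s) = xval s ∧
    vval e (applyB (Fbig e ι) (initL (R := R)) s) = 0 := by
  rw [initL, applyB_append]
  set s₁ := applyB (Fbig e ι) ((List.finRange d).map zc) s with hs₁
  have hx₁ : xval s₁ = xval s := by
    rw [hs₁, applyB_zc]; funext i; simp [xval, xc]
  have hc₁ : cval e s₁ = cval e s := by
    rw [hs₁, applyB_zc]
    funext w'
    simp [cval, cc]
  have hcs₁ : csum e s₁ = csum e s := by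
    rw [csum, hc₁, ← csum]
  have hz₁ : zval e s₁ = -(csum e s) := by
    rw [hs₁, applyB_zc]
    funext r
    simp [zval, zc, List.mem_finRange]
  have hv₁ : vval e s₁ = 0 := by
    rw [vval, hz₁, hcs₁, neg_add_cancel]
  have hxinl : ∀ i, applyB (Fbig e ι) ((List.finRange n).map yc) s₁ (Sum.inl i)
      = s₁ (Sum.inl i) := by
    intro i
    rw [applyB_yc]
    simp
  have hirr : ∀ k, applyB (Fbig e ι) ((List.finRange n).map yc) s₁ (Sum.inr (Sum.inr k))
      = s₁ (Sum.inr (Sum.inr k)) := by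
    intro k
    rw [applyB_yc]
    simp
  constructor
  · funext i
    show applyB (Fbig e ι) ((List.finRange n).map yc) s₁ (Sum.inr (Sum.inl i)) = xval s i
    rw [applyB_yc]
    simp only [Sum.elim_inr, Sum.elim_inl, List.mem_finRange, if_true]
    exact congrFun hx₁ i
  · have hzz : zval e (applyB (Fbig e ι) ((List.finRange n).map yc) s₁) = zval e s₁ := by
      funext r
      simp only [zval, zc]
      rw [hirr]
    have hcc2 : cval e (applyB (Fbig e ι) ((List.finRange n).map yc) s₁) = cval e s₁ := by
      funext w'
      simp only [cval, cc]
      rw [hirr]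
    rw [vval, hzz, csum, hcc2, ← csum, ← vval, hv₁]


/-! ### full simulation programs -/

variable (ι) in
def buildL : (Fin d → R) → List ((Fin n → A) → Fin n → A) → List (List (Idx n d R))
  | _, [] => []
  | v, g :: gs => stepL ι v g :: buildL (ι g) gs

variable (ι) in
def simL : List ((Fin n → A) → Fin n → A) → List (List (Idx n d R))
  | [] => []
  | g :: gs => (initL ++ stepL ι 0 g) :: buildL ι (ι g) gs

lemma buildL_length (v : Fin d → R) (gs : List ((Fin n → A) → Fin n → A)) :
    (buildL ι v gs).length = gs.length := by
  induction gs generalizing v with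
  | nil => rfl
  | cons g gs ih => simp [buildL, ih]

lemma simL_length (gs : List ((Fin n → A) → Fin n → A)) :
    (simL ι gs).length = gs.length := by
  cases gs with
  | nil => rfl
  | cons g gs => simp [simL, buildL_length]

lemma buildL_ne_nil (v : Fin d → R) (gs : List ((Fin n → A) → Fin n → A)) :
    ∀ l ∈ buildL ι v gs, l ≠ [] := by
  induction gs generalizing v with
  | nil => intro l hl; simp [buildL] at hl
  | cons g gs ih =>
    intro l hl
    rcases (by simpa [buildL] using hl : l = stepL ι v g ∨ l ∈ buildL ι (ι g) gs) with h | h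
    · subst h; simp [stepL]
    · exact ih (ι g) l h

lemma simL_ne_nil (gs : List ((Fin n → A) → Fin n → A)) :
    ∀ l ∈ simL ι gs, l ≠ [] := by
  cases gs with
  | nil => intro l hl; simp [simL] at hl
  | cons g gs =>
    intro l hl
    rcases (by simpa [simL] using hl :
        l = initL ++ stepL ι 0 g ∨ l ∈ buildL ι (ι g) gs) with h | h
    · subst h; simp [stepL, initL]
    · exact buildL_ne_nil (ι g) gs l h

lemma buildL_flatten_length (v : Fin d → R) (gs : List ((Fin n → A) → Fin n → A)) :
    ((buildL ι v gs).flatten).length = gs.length * (n + 1) := by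
  induction gs generalizing v with
  | nil => simp [buildL]
  | cons g gs ih =>
    simp only [buildL, List.flatten_cons, List.length_append, ih, List.length_cons,
      stepL, List.length_map, List.length_finRange]
    ring

lemma simL_flatten_length (g : (Fin n → A) → Fin n → A)
    (gs : List ((Fin n → A) → Fin n → A)) :
    ((simL ι (g :: gs)).flatten).length = (d + n) + (gs.length + 1) * (n + 1) := by
  simp only [simL, List.flatten_cons, List.length_append, buildL_flatten_length,
    initL, stepL, List.length_append, List.length_map, List.length_finRange,
    List.length_cons]
  ring

lemma build_spec (gs : List ((Fin n → A) → Fin n → A)) :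
    ∀ (v : Fin d → R) (s : Idx n d R → A), vval e s = v →
      ∀ (i : ℕ) (hi : i < gs.length),
        xval (applyB (Fbig e ι) (((buildL ι v gs).take (i + 1)).flatten) s)
          = gs.get ⟨i, hi⟩ (yval s) := by
  induction gs with
  | nil => intro v s _ i hi; simp at hi
  | cons g gs ih =>
    intro v s hv i hi
    cases i with
    | zero =>
      have hflat : ((buildL ι v (g :: gs)).take 1).flatten = stepL ι v g := by
        simp [buildL]
      rw [hflat]
      exact (step_spec s v g hv).1
    | succ j =>
      have hflat : ((buildL ι v (g :: gs)).take (j + 2)).flatten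
          = stepL ι v g ++ ((buildL ι (ι g) gs).take (j + 1)).flatten := by
        simp [buildL, List.take_succ_cons, List.flatten_cons]
      rw [hflat, applyB_append]
      obtain ⟨hx', hy', hv'⟩ := step_spec (ι := ι) s v g hv
      have hj : j < gs.length := by simpa using hi
      have := ih (ι g) _ hv' j hj
      rw [this, hy']
      simp [List.get_cons_succ]

lemma sim_spec (gs : List ((Fin n → A) → Fin n → A)) (i : ℕ) (hi : i < gs.length)
    (s : Idx n d R → A) :
    xval (applyB (Fbig e ι) (((simL ι gs).take (i + 1)).flatten) s)
      = gs.get ⟨i, hi⟩ (xval s) := by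
  cases gs with
  | nil => simp at hi
  | cons g gs =>
    have hflat : ((simL ι (g :: gs)).take (i + 1)).flatten
        = initL ++ ((buildL ι 0 (g :: gs)).take (i + 1)).flatten := by
      simp [simL, buildL, List.take_succ_cons, List.flatten_cons, List.append_assoc]
    rw [hflat, applyB_append]
    obtain ⟨hy0, hv0⟩ := init_spec (e := e) (ι := ι) s
    have := build_spec (ι := ι) (g :: gs) 0 _ hv0 i hi
    rw [this, hy0]

end Machine
end CUaux


open CUaux in
/-- Fix `q ≥ 2` and `A` with `|A| = q`. For every `ε > 0` there is `N` such that for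
all `n ≥ N` there is a complete `n`-universal transformation `f` of some `A^m` (`m ≥ n`)
whose maximal sequential time is at most `(n + 1 + ε)·q^(n·q^n)`. -/
theorem complete_universal_max_seq_time_upper (q : ℕ) (hq : 2 ≤ q)
    (A : Type*) [Fintype A] (hA : Fintype.card A = q) (ε : ℝ) (hε : 0 < ε) :
    ∃ N : ℕ, ∀ n : ℕ, N ≤ n →
      ∃ (m : ℕ) (hmn : n ≤ m) (f : (Fin m → A) → Fin m → A),
        -- f is complete n-universal
        (∀ gs : List ((Fin n → A) → Fin n → A), ∃ hs, SeqWitness hmn f gs hs) ∧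
        -- every sequence listing all transformations of A^n exactly once can be
        -- simulated using at most (n + 1 + ε)·q^(n·q^n) instructions
        (∀ gs : List ((Fin n → A) → Fin n → A), gs.Nodup → (∀ g, g ∈ gs) →
          ∃ hs, SeqWitness hmn f gs hs ∧
            (hs.flatten.length : ℝ) ≤ ((n : ℝ) + 1 + ε) * (q : ℝ) ^ (n * q ^ n)) := by
  classical
  haveI : NeZero q := ⟨by omega⟩
  refine ⟨max 3 ⌈1/ε⌉₊, fun n hn => ?_⟩
  set d := n * q ^ n with hd
  have hcardA : Fintype.card A = Fintype.card (ZMod q) := by simp [hA, ZMod.card]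
  let e : A ≃ ZMod q := Fintype.equivOfCardEq hcardA
  have hcardT : Fintype.card ((Fin n → A) → Fin n → A)
      = Fintype.card (Fin d → ZMod q) := by
    rw [Fintype.card_fun, Fintype.card_fun, Fintype.card_fun]
    simp only [hA, ZMod.card, Fintype.card_fin]
    rw [← pow_mul]
  let ι : ((Fin n → A) → Fin n → A) ≃ (Fin d → ZMod q) := Fintype.equivOfCardEq hcardT
  set K := Fintype.card (Fin n ⊕ (Fin d ⊕ (Fin d → ZMod q))) with hK
  have hmn : n ≤ n + K := Nat.le_add_right n K
  refine ⟨n + K, hmn, ?_⟩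
  have eK : Fin K ≃ (Fin n ⊕ (Fin d ⊕ (Fin d → ZMod q))) :=
    Fintype.equivOfCardEq (by rw [Fintype.card_fin])
  set σ : Fin (n + K) ≃ Idx n d (ZMod q) :=
    finSumFinEquiv.symm.trans (Equiv.sumCongr (Equiv.refl (Fin n)) eK) with hσdef
  have hσ : ∀ j : Fin n, σ (Fin.castLE hmn j) = Sum.inl j := by
    intro j
    have hc : (Fin.castLE hmn j) = Fin.castAdd K j := by ext; rfl
    rw [hσdef, hc]
    simp
  set F := Fbig e ι with hF
  have hprs : ∀ s : Idx n d (ZMod q) → A, pr hmn (s ∘ σ) = xval s := by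
    intro s; funext j
    show s (σ (Fin.castLE hmn j)) = s (Sum.inl j)
    rw [hσ j]
  have hpr : ∀ x : Fin (n + K) → A, xval (x ∘ σ.symm) = pr hmn x := by
    intro x; funext j
    show x (σ.symm (Sum.inl j)) = x (Fin.castLE hmn j)
    rw [← hσ j, Equiv.symm_apply_apply]
  have witness : ∀ gs : List ((Fin n → A) → Fin n → A),
      SeqWitness hmn (fun y i => F (y ∘ σ.symm) (σ i)) gs
        ((simL ι gs).map (List.map σ.symm)) := by
    intro gs
    refine ⟨by simp [simL_length], ?_, ?_⟩
    · intro l hl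
      simp only [List.mem_map] at hl
      obtain ⟨l', hl', rfl⟩ := hl
      simpa using simL_ne_nil (ι := ι) gs l' hl'
    · intro i hi x
      have hflatten :
          ((((simL ι gs).map (List.map σ.symm)).take (i + 1)).flatten)
            = (((simL ι gs).take (i + 1)).flatten).map σ.symm := by
        rw [← List.map_take, ← List.map_flatten]
      rw [hflatten, conj σ F _ x, hprs, sim_spec (e := e) (ι := ι) gs i hi, hpr]
  refine ⟨fun y i => F (y ∘ σ.symm) (σ i), fun gs => ⟨_, witness gs⟩, ?_⟩
  intro gs hnd hall
  refine ⟨_, witness gs, ?_⟩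
  have hno : gs.length = Fintype.card ((Fin n → A) → Fin n → A) := by
    rw [← List.toFinset_card_of_nodup hnd,
      show gs.toFinset = Finset.univ from
        Finset.eq_univ_iff_forall.2 (fun g => List.mem_toFinset.2 (hall g)),
      Finset.card_univ]
  have hcardT2 : Fintype.card ((Fin n → A) → Fin n → A) = q ^ (n * q ^ n) := by
    rw [Fintype.card_fun, Fintype.card_fun, hA, Fintype.card_fin, ← pow_mul]
  obtain ⟨g, gs', rfl⟩ : ∃ g gs', gs = g :: gs' := by
    cases gs with
    | nil => exact absurd (hall id) (by simp)
    | cons g gs' => exact ⟨g, gs', rfl⟩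
  have hfl : ((((simL ι (g :: gs')).map (List.map σ.symm)).flatten)).length
      = (d + n) + (gs'.length + 1) * (n + 1) := by
    rw [← List.map_flatten, List.length_map, simL_flatten_length]
  have hlenL : gs'.length + 1 = q ^ (n * q ^ n) := by
    have h := hno.trans hcardT2
    simpa using h
  rw [hfl, hlenL]
  -- the numeric estimate
  have hn3 : 3 ≤ n := le_trans (le_max_left _ _) hn
  have hce : ⌈1/ε⌉₊ ≤ n := le_trans (le_max_right _ _) hn
  have hεn : 1/ε ≤ (n : ℝ) := Nat.ceil_le.1 hce
  have hqn : n ≤ q ^ n :=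
    le_trans (Nat.lt_two_pow_self (n := n)).le (Nat.pow_le_pow_left hq n)
  have h8 : 8 ≤ q ^ n :=
    le_trans (by norm_num : (8:ℕ) ≤ 2 ^ 3)
      (le_trans (Nat.pow_le_pow_right (by norm_num) hn3) (Nat.pow_le_pow_left hq n))
  have hqn1 : 1 ≤ q ^ n := by omega
  have h1 : n * q ^ n + n ≤ q ^ (2 * n + 1) := by
    have e1 : n * q ^ n + n ≤ 2 * (n * q ^ n) := by nlinarith
    have e2 : 2 * (n * q ^ n) ≤ q * (q ^ n * q ^ n) := by nlinarith
    have e3 : q * (q ^ n * q ^ n) = q ^ (2 * n + 1) := by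
      rw [two_mul, pow_succ, pow_add]; ring
    omega
  have h8n : 8 * n ≤ n * q ^ n := by
    calc 8 * n = n * 8 := by ring
      _ ≤ n * q ^ n := Nat.mul_le_mul_left n h8
  set M := n * q ^ n - (2 * n + 1) with hM
  have h2 : 2 * n + 1 + M = n * q ^ n := by omega
  have h3 : n ≤ M := by omega
  have hMq : n ≤ q ^ M :=
    le_trans h3 (le_trans (Nat.lt_two_pow_self (n := M)).le (Nat.pow_le_pow_left hq M))
  have hεq : 1 ≤ ε * (q : ℝ) ^ M := by
    have hb : 1/ε ≤ ((q : ℝ)) ^ M := by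
      refine le_trans hεn ?_
      exact_mod_cast Nat.cast_le.2 hMq
    calc (1:ℝ) = ε * (1/ε) := by field_simp
      _ ≤ ε * (q : ℝ) ^ M := mul_le_mul_of_nonneg_left hb hε.le
  have key : ((n * q ^ n + n : ℕ) : ℝ) ≤ ε * (q : ℝ) ^ (n * q ^ n) := by
    have hLsplit : (q : ℝ) ^ (n * q ^ n) = (q : ℝ) ^ (2 * n + 1) * (q : ℝ) ^ M := by
      rw [← pow_add, h2]
    have h1c : ((n * q ^ n + n : ℕ) : ℝ) ≤ (q : ℝ) ^ (2 * n + 1) := by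
      exact_mod_cast h1
    have hpow : (0:ℝ) < (q : ℝ) ^ (2 * n + 1) := by positivity
    calc ((n * q ^ n + n : ℕ) : ℝ) ≤ (q : ℝ) ^ (2 * n + 1) := h1c
      _ = (q : ℝ) ^ (2 * n + 1) * 1 := by ring
      _ ≤ (q : ℝ) ^ (2 * n + 1) * (ε * (q : ℝ) ^ M) :=
          mul_le_mul_of_nonneg_left hεq hpow.le
      _ = ε * (q : ℝ) ^ (n * q ^ n) := by rw [hLsplit]; ring
  rw [hd]
  push_cast
  push_cast at key
  nlinarith [key]
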